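/- Let a, b be nonzero real numbers. The set of real numbers t satisfying |a·t² + b·t| ≤ 1 has Lebesgue measure at most C·|a|^{-1/2} for some absolute constant C. (In fact, if b² ≤ 8|a| its length is O(|a|^{-1/2}), and if b² > 8|a| its length is O(|b|^{-1}) = O(|a|^{-1/2}).) -/

import Mathlib

open MeasureTheory

theorem quad_sublevel_measure :
    ∃ C : ℝ, 0 < C ∧ ∀ a b : ℝ, a ≠ 0 → b ≠ 0 →
      volume {t : ℝ | |a * t ^ 2 + b * t| ≤ 1} ≤
        ENNReal.ofReal (C * |a| ^ (-(1 / 2 : ℝ))) := by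
  refine ⟨2 * Real.sqrt 2, by positivity, fun a b ha hb => ?_⟩
  have haa : (0:ℝ) < |a| := abs_pos.mpr ha
  set ε : ℝ := 1 / |a| with hε
  have hεpos : 0 < ε := by positivity
  set r : ℝ := b / (2 * a) with hr
  set A : ℝ := Real.sqrt (r ^ 2 - ε) with hA
  set B : ℝ := Real.sqrt (r ^ 2 + ε) with hB
  have hA0 : 0 ≤ A := Real.sqrt_nonneg _
  have hB0 : 0 ≤ B := Real.sqrt_nonneg _
  set s : ℝ := Real.sqrt (2 * ε) with hs
  have hs0 : 0 ≤ s := Real.sqrt_nonneg _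
  have hAB : A ≤ B := Real.sqrt_le_sqrt (by linarith)
  -- containment in two intervals
  have hsub : {t : ℝ | |a * t ^ 2 + b * t| ≤ 1} ⊆
      Set.Icc (-r - B) (-r - A) ∪ Set.Icc (-r + A) (-r + B) := by
    intro t ht
    simp only [Set.mem_setOf_eq] at ht
    have key : |(t + r) ^ 2 - r ^ 2| ≤ ε := by
      have h1 : a * ((t + r) ^ 2 - r ^ 2) = a * t ^ 2 + b * t := by
        rw [hr]; field_simp; ring
      have h2 : |a| * |(t + r) ^ 2 - r ^ 2| ≤ 1 := by
        rw [← abs_mul, h1]; exact ht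
      rw [hε, le_div_iff₀ haa]
      nlinarith
    have h2 : (t + r) ^ 2 ≤ r ^ 2 + ε := by
      have := (abs_le.mp key).2; linarith
    have h3 : r ^ 2 - ε ≤ (t + r) ^ 2 := by
      have := (abs_le.mp key).1; linarith
    have hub : |t + r| ≤ B := by
      rw [hB, ← Real.sqrt_sq_eq_abs]
      exact Real.sqrt_le_sqrt h2
    have hlb : A ≤ |t + r| := by
      rw [hA, ← Real.sqrt_sq_eq_abs]
      exact Real.sqrt_le_sqrt h3
    rcases le_or_gt 0 (t + r) with h | h
    · right
      rw [abs_of_nonneg h] at hub hlb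
      constructor <;> linarith
    · left
      rw [abs_of_neg h] at hub hlb
      constructor <;> linarith
  -- length bound: B - A ≤ s
  have hBA : B ≤ A + s := by
    have hA2 : r ^ 2 - ε ≤ A ^ 2 := by
      rcases le_or_gt 0 (r ^ 2 - ε) with h | h
      · rw [hA, Real.sq_sqrt h]
      · nlinarith [sq_nonneg A]
    have hs2 : s ^ 2 = 2 * ε := Real.sq_sqrt (by linarith)
    have hB2 : B ^ 2 = r ^ 2 + ε := Real.sq_sqrt (by nlinarith [sq_nonneg r])
    nlinarith [mul_nonneg hA0 hs0]
  -- measure computation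
  calc volume {t : ℝ | |a * t ^ 2 + b * t| ≤ 1}
      ≤ volume (Set.Icc (-r - B) (-r - A) ∪ Set.Icc (-r + A) (-r + B)) :=
        measure_mono hsub
    _ ≤ volume (Set.Icc (-r - B) (-r - A)) + volume (Set.Icc (-r + A) (-r + B)) :=
        measure_union_le _ _
    _ = ENNReal.ofReal (B - A) + ENNReal.ofReal (B - A) := by
        rw [Real.volume_Icc, Real.volume_Icc]; ring_nf
    _ ≤ ENNReal.ofReal (2 * Real.sqrt 2 * |a| ^ (-(1 / 2 : ℝ))) := by
        rw [← ENNReal.ofReal_add (by linarith) (by linarith)]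
        apply ENNReal.ofReal_le_ofReal
        have h1 : |a| ^ (-(1 / 2 : ℝ)) = Real.sqrt ε := by
          rw [Real.rpow_neg (abs_nonneg a), ← Real.sqrt_eq_rpow, hε,
            one_div, Real.sqrt_inv]
        have h2 : s = Real.sqrt 2 * Real.sqrt ε := by
          rw [hs, Real.sqrt_mul (by norm_num)]
        rw [h1]
        nlinarith [Real.sqrt_nonneg ε, Real.sqrt_nonneg (2:ℝ)]
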